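/- arXiv:1111.0078 — 2 statements merged into one kernel-verified Lean document; each statement's English description precedes it below -/
import Mathlib

section
/- Fix ν < 2 and let g(z) = ∑_{n=0}^∞ c_n z^n where c_n = Γ(2n + 3 - ν)/(n! Γ(n + 2 - ν/2)). Then for every y ≥ 0, g(y/(y+2)^2) = (2^{2-ν}/√π) Γ((3-ν)/2) · (y+2)^{3-ν} / (y^2 + 4)^{(3-ν)/2}. -/
open Real

open MeasureTheory in
lemma binom_tsum_aux {a x : ℝ} (ha : 0 < a) (hx0 : 0 ≤ x) (hx1 : x < 1) :
    ∑' n : ℕ, Real.Gamma ((n : ℝ) + a) / (n.factorial : ℝ) * x ^ n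
      = Real.Gamma a * (1 - x) ^ (-a) := by
  rcases eq_or_lt_of_le hx0 with h0 | hx0
  · rw [← h0]
    rw [tsum_eq_single 0 (fun n hn => by simp [zero_pow hn])]
    simp [Real.one_rpow]
  have h1x : (0:ℝ) < 1 - x := by linarith
  set F : ℕ → ℝ → ℝ := fun n t => x ^ n / (n.factorial : ℝ)
      * (Real.exp (-t) * t ^ ((n : ℝ) + a - 1)) with hF
  have han : ∀ n : ℕ, (0:ℝ) < (n : ℝ) + a := fun n => by positivity
  have hint : ∀ n : ℕ, IntegrableOn (F n) (Set.Ioi 0) := fun n =>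
    (Real.GammaIntegral_convergent (han n)).const_mul _
  have hFint : ∀ n : ℕ, ∫ t in Set.Ioi 0, F n t
      = Real.Gamma ((n : ℝ) + a) / (n.factorial : ℝ) * x ^ n := by
    intro n
    rw [hF]
    rw [MeasureTheory.integral_const_mul, ← Real.Gamma_eq_integral (han n)]
    ring
  have hnorm : ∀ n : ℕ, ∫ t in Set.Ioi 0, ‖F n t‖ = ∫ t in Set.Ioi 0, F n t := by
    intro n
    refine setIntegral_congr_fun measurableSet_Ioi (fun t ht => ?_)
    have ht' : (0:ℝ) < t := ht
    rw [Real.norm_eq_abs, abs_of_nonneg (by positivity)]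
  have hgpos : ∀ n : ℕ, (0:ℝ) < Real.Gamma ((n : ℝ) + a) / (n.factorial : ℝ) * x ^ n := by
    intro n
    have := Real.Gamma_pos_of_pos (han n)
    have := Nat.factorial_pos n
    positivity
  -- summability of the integrals
  have hsum : Summable (fun n : ℕ => Real.Gamma ((n : ℝ) + a) / (n.factorial : ℝ) * x ^ n) := by
    apply summable_of_ratio_test_tendsto_lt_one hx1
      (Filter.Eventually.of_forall fun n => (hgpos n).ne')
    have key : ∀ n : ℕ,
        ‖Real.Gamma ((n + 1 : ℕ) + a) / ((n + 1).factorial : ℝ) * x ^ (n + 1)‖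
          / ‖Real.Gamma ((n : ℝ) + a) / (n.factorial : ℝ) * x ^ n‖
        = ((n : ℝ) + a) / ((n : ℝ) + 1) * x := by
      intro n
      rw [Real.norm_eq_abs, Real.norm_eq_abs, abs_of_pos (hgpos (n + 1)), abs_of_pos (hgpos n)]
      have h1 : ((n + 1 : ℕ) : ℝ) + a = ((n : ℝ) + a) + 1 := by push_cast; ring
      rw [h1, Real.Gamma_add_one (han n).ne', Nat.factorial_succ, pow_succ]
      have hG := (Real.Gamma_pos_of_pos (han n)).ne'
      have hfac : ((n.factorial : ℝ)) ≠ 0 := by positivity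
      have hxp : x ^ n ≠ 0 := by positivity
      have hn1 : ((n : ℝ) + 1) ≠ 0 := by positivity
      push_cast
      field_simp
    refine Filter.Tendsto.congr (fun n => (key n).symm) ?_
    have h1 : Filter.Tendsto (fun n : ℕ => ((n : ℝ) + a) / ((n : ℝ) + 1))
        Filter.atTop (nhds 1) := by
      have heq : ∀ n : ℕ, ((n : ℝ) + a) / ((n : ℝ) + 1)
          = 1 + (a - 1) * (1 / ((n : ℝ) + 1)) := by
        intro n
        have hn1 : ((n : ℝ) + 1) ≠ 0 := by positivity
        field_simp
        ring
      refine Filter.Tendsto.congr (fun n => (heq n).symm) ?_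
      have := (tendsto_one_div_add_atTop_nhds_zero_nat :
        Filter.Tendsto (fun n : ℕ => 1 / ((n : ℝ) + 1)) Filter.atTop (nhds 0))
      have h2 := (tendsto_const_nhds (x := (1:ℝ))).add
        ((tendsto_const_nhds (x := a - 1)).mul this)
      simpa using h2
    have h3 := h1.mul (tendsto_const_nhds (x := x))
    simpa using h3
  have hnormsum : Summable fun n : ℕ => ∫ t in Set.Ioi 0, ‖F n t‖ := by
    refine hsum.congr (fun n => ?_)
    rw [hnorm n, hFint n]
  -- pointwise sum
  have hpt : ∀ t ∈ Set.Ioi (0:ℝ), ∑' n : ℕ, F n t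
      = t ^ (a - 1) * Real.exp (-((1 - x) * t)) := by
    intro t ht
    have ht' : (0:ℝ) < t := ht
    have hFt : ∀ n : ℕ, F n t
        = (Real.exp (-t) * t ^ (a - 1)) * ((x * t) ^ n / (n.factorial : ℝ)) := by
      intro n
      rw [hF]
      simp only
      rw [show (n : ℝ) + a - 1 = (n : ℝ) + (a - 1) by ring, Real.rpow_add ht',
        Real.rpow_natCast, mul_pow]
      ring
    rw [tsum_congr hFt, tsum_mul_left]
    have hexp : ∑' n : ℕ, (x * t) ^ n / (n.factorial : ℝ) = Real.exp (x * t) := by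
      rw [Real.exp_eq_exp_ℝ, NormedSpace.exp_eq_tsum_div]
    rw [hexp, show Real.exp (-t) * t ^ (a - 1) * Real.exp (x * t)
        = t ^ (a - 1) * (Real.exp (-t) * Real.exp (x * t)) from by ring, ← Real.exp_add,
      show -t + x * t = -((1 - x) * t) by ring]
  calc ∑' n : ℕ, Real.Gamma ((n : ℝ) + a) / (n.factorial : ℝ) * x ^ n
      = ∑' n : ℕ, ∫ t in Set.Ioi 0, F n t := by
        exact tsum_congr fun n => (hFint n).symm
    _ = ∫ t in Set.Ioi 0, ∑' n : ℕ, F n t :=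
        MeasureTheory.integral_tsum_of_summable_integral_norm hint hnormsum
    _ = ∫ t in Set.Ioi 0, t ^ (a - 1) * Real.exp (-((1 - x) * t)) :=
        setIntegral_congr_fun measurableSet_Ioi hpt
    _ = (1 / (1 - x)) ^ a * Real.Gamma a :=
        Real.integral_rpow_mul_exp_neg_mul_Ioi ha h1x
    _ = Real.Gamma a * (1 - x) ^ (-a) := by
        rw [one_div, ← Real.rpow_neg_one (1 - x),
          ← Real.rpow_mul (by linarith : (0:ℝ) ≤ 1 - x), neg_one_mul, mul_comm]

/-- For `ν < 2` and `y ≥ 0`, the power series `g(z) = ∑ c_n z^n` with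
`c_n = Γ(2n+3-ν)/(n! Γ(n+2-ν/2))` satisfies
`g(y/(y+2)^2) = (2^(2-ν)/√π) Γ((3-ν)/2) (y+2)^(3-ν) / (y^2+4)^((3-ν)/2)`. -/
theorem series_closed_form (ν : ℝ) (hν : ν < 2) (y : ℝ) (hy : 0 ≤ y) :
    ∑' n : ℕ,
        Real.Gamma (2 * (n : ℝ) + 3 - ν) / ((n.factorial : ℝ) * Real.Gamma ((n : ℝ) + 2 - ν / 2))
          * (y / (y + 2) ^ 2) ^ n
      = 2 ^ (2 - ν) / Real.sqrt π * Real.Gamma ((3 - ν) / 2)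
          * (y + 2) ^ (3 - ν) / (y ^ 2 + 4) ^ ((3 - ν) / 2) := by
  have hy2 : (0:ℝ) < y + 2 := by linarith
  have ha : (0:ℝ) < (3 - ν) / 2 := by linarith
  have hden : (0:ℝ) < y ^ 2 + 4 := by positivity
  have hsq2 : (0:ℝ) < (y + 2) ^ 2 := by positivity
  have hx0 : (0:ℝ) ≤ 4 * (y / (y + 2) ^ 2) := by positivity
  have hx1 : 4 * (y / (y + 2) ^ 2) < 1 := by
    rw [show 4 * (y / (y + 2) ^ 2) = 4 * y / (y + 2) ^ 2 from by ring, div_lt_one hsq2]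
    nlinarith
  have hπ : (0:ℝ) < Real.sqrt π := Real.sqrt_pos.mpr Real.pi_pos
  have hcoef : ∀ n : ℕ,
      Real.Gamma (2 * (n : ℝ) + 3 - ν) / ((n.factorial : ℝ) * Real.Gamma ((n : ℝ) + 2 - ν / 2))
          * (y / (y + 2) ^ 2) ^ n
        = 2 ^ (2 - ν) / Real.sqrt π
          * (Real.Gamma ((n : ℝ) + (3 - ν) / 2) / (n.factorial : ℝ)
              * (4 * (y / (y + 2) ^ 2)) ^ n) := by
    intro n
    have hn0 : (0:ℝ) ≤ (n : ℝ) := n.cast_nonneg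
    have hApos : 0 < Real.Gamma ((n : ℝ) + (3 - ν) / 2) :=
      Real.Gamma_pos_of_pos (by linarith)
    have hBpos : 0 < Real.Gamma ((n : ℝ) + 2 - ν / 2) :=
      Real.Gamma_pos_of_pos (by linarith)
    have hfac : (0:ℝ) < (n.factorial : ℝ) := by
      exact_mod_cast n.factorial_pos
    have hdup := Real.Gamma_mul_Gamma_add_half ((n : ℝ) + (3 - ν) / 2)
    rw [show (n : ℝ) + (3 - ν) / 2 + 1 / 2 = (n : ℝ) + 2 - ν / 2 from by ring,
      show 2 * ((n : ℝ) + (3 - ν) / 2) = 2 * (n : ℝ) + 3 - ν from by ring] at hdup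
    have h2pos : (0:ℝ) < (2:ℝ) ^ ((1:ℝ) - (2 * (n : ℝ) + 3 - ν)) :=
      Real.rpow_pos_of_pos two_pos _
    have hinv : ((2:ℝ) ^ ((1:ℝ) - (2 * (n : ℝ) + 3 - ν)))⁻¹
        = 2 ^ ((2:ℝ) - ν) * 4 ^ n := by
      rw [← Real.rpow_neg (by norm_num : (0:ℝ) ≤ 2),
        show -((1:ℝ) - (2 * (n : ℝ) + 3 - ν)) = ((2:ℝ) - ν) + 2 * (n : ℝ) from by ring,
        Real.rpow_add two_pos,
        show (2:ℝ) * (n : ℝ) = ((2 * n : ℕ) : ℝ) from by push_cast; ring,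
        Real.rpow_natCast, pow_mul]
      norm_num
    have hG : Real.Gamma (2 * (n : ℝ) + 3 - ν)
        = Real.Gamma ((n : ℝ) + (3 - ν) / 2) * Real.Gamma ((n : ℝ) + 2 - ν / 2)
            * (2 ^ ((2:ℝ) - ν) * 4 ^ n) / Real.sqrt π := by
      rw [← hinv, div_eq_mul_inv, hdup,
        show Real.Gamma (2 * (n : ℝ) + 3 - ν) * 2 ^ ((1:ℝ) - (2 * (n : ℝ) + 3 - ν)) * Real.sqrt π
            * (2 ^ ((1:ℝ) - (2 * (n : ℝ) + 3 - ν)))⁻¹ * (Real.sqrt π)⁻¹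
          = Real.Gamma (2 * (n : ℝ) + 3 - ν)
            * ((2:ℝ) ^ ((1:ℝ) - (2 * (n : ℝ) + 3 - ν)) * (2 ^ ((1:ℝ) - (2 * (n : ℝ) + 3 - ν)))⁻¹)
            * (Real.sqrt π * (Real.sqrt π)⁻¹) from by ring,
        mul_inv_cancel₀ h2pos.ne', mul_inv_cancel₀ hπ.ne', mul_one, mul_one]
    have hcan : Real.Gamma (2 * (n : ℝ) + 3 - ν)
        / ((n.factorial : ℝ) * Real.Gamma ((n : ℝ) + 2 - ν / 2))
        = Real.Gamma ((n : ℝ) + (3 - ν) / 2) * (2 ^ ((2:ℝ) - ν) * 4 ^ n)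
          / (Real.sqrt π * (n.factorial : ℝ)) := by
      rw [hG, div_div,
        show Real.Gamma ((n : ℝ) + (3 - ν) / 2) * Real.Gamma ((n : ℝ) + 2 - ν / 2)
            * (2 ^ ((2:ℝ) - ν) * 4 ^ n)
          = Real.Gamma ((n : ℝ) + (3 - ν) / 2) * (2 ^ ((2:ℝ) - ν) * 4 ^ n)
            * Real.Gamma ((n : ℝ) + 2 - ν / 2) from by ring,
        show Real.sqrt π * ((n.factorial : ℝ) * Real.Gamma ((n : ℝ) + 2 - ν / 2))
          = Real.sqrt π * (n.factorial : ℝ) * Real.Gamma ((n : ℝ) + 2 - ν / 2) from by ring,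
        mul_div_mul_right _ _ hBpos.ne']
    rw [hcan, mul_pow]
    ring
  rw [tsum_congr hcoef, tsum_mul_left, binom_tsum_aux ha hx0 hx1]
  have h1x : 1 - 4 * (y / (y + 2) ^ 2) = (y ^ 2 + 4) / (y + 2) ^ 2 := by
    field_simp
    ring
  rw [h1x]
  have hpow : ((y ^ 2 + 4) / (y + 2) ^ 2) ^ (-((3 - ν) / 2))
      = (y + 2) ^ ((3:ℝ) - ν) / (y ^ 2 + 4) ^ ((3 - ν) / 2) := by
    rw [Real.rpow_neg (div_nonneg hden.le hsq2.le), ← Real.inv_rpow (div_nonneg hden.le hsq2.le),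
      inv_div, Real.div_rpow hsq2.le hden.le]
    congr 1
    rw [← Real.rpow_natCast (y + 2) 2, ← Real.rpow_mul hy2.le]
    norm_num
    congr 1
    ring
  rw [hpow]
  ring
end

section
/- Define I(ν) = ∫_0^∞ h_ν(y) log y dy where h_ν(y) = (2^{2-ν}/√π)(Γ((3-ν)/2)/Γ(1-ν/2))(y^2+4)^{-(3-ν)/2}, for ν < 2. Then I(ν) = (1/4)(ψ(1) - ψ((2-ν)/2)), and consequently I(ν) < 0 if and only if ν < 0. -/
open MeasureTheory Real Set

/-- The digamma function `ψ = Γ'/Γ`. -/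
noncomputable def digamma (x : ℝ) : ℝ := deriv Real.Gamma x / Real.Gamma x

/-- `I(ν) = ∫_0^∞ h_ν(y) log y dy`, where
`h_ν(y) = (2^(2-ν)/√π)(Γ((3-ν)/2)/Γ(1-ν/2))(y²+4)^(-(3-ν)/2)`. -/
noncomputable def I (ν : ℝ) : ℝ :=
  ∫ y in Ioi (0 : ℝ),
    2 ^ (2 - ν) / Real.sqrt π * (Real.Gamma ((3 - ν) / 2) / Real.Gamma (1 - ν / 2))
      * (y ^ 2 + 4) ^ (-((3 - ν) / 2)) * Real.log y

open Filter Metric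

lemma real_beta {u v : ℝ} (hu : 0 < u) (hv : 0 < v) :
    ∫ x in Ioo (0:ℝ) 1, x ^ (u - 1) * (1 - x) ^ (v - 1) =
      Real.Gamma u * Real.Gamma v / Real.Gamma (u + v) := by
  have h := Complex.Gamma_mul_Gamma_eq_betaIntegral (s := u) (t := v) (by simpa using hu) (by simpa using hv)
  have hbeta : Complex.betaIntegral u v = ((∫ x in Ioo (0:ℝ) 1, x ^ (u - 1) * (1 - x) ^ (v - 1) : ℝ) : ℂ) := by
    rw [Complex.betaIntegral, intervalIntegral.integral_of_le zero_le_one,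
      MeasureTheory.integral_Ioc_eq_integral_Ioo]
    have : ∫ t in Ioo (0:ℝ) 1, ((t:ℂ)) ^ ((u:ℂ) - 1) * (1 - (t:ℂ)) ^ ((v:ℂ) - 1)
        = ∫ t in Ioo (0:ℝ) 1, ((t ^ (u - 1) * (1 - t) ^ (v - 1) : ℝ) : ℂ) := by
      refine setIntegral_congr_fun measurableSet_Ioo fun x hx => ?_
      rw [Complex.ofReal_mul, Complex.ofReal_cpow hx.1.le (u-1),
        Complex.ofReal_cpow (by linarith [hx.2] : (0:ℝ) ≤ 1 - x) (v-1)]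
      push_cast
      ring
    rw [this]
    exact integral_ofReal
  rw [hbeta, Complex.Gamma_ofReal, Complex.Gamma_ofReal, ← Complex.ofReal_add,
    Complex.Gamma_ofReal, ← Complex.ofReal_mul, ← Complex.ofReal_mul] at h
  have h3 := Complex.ofReal_injective h
  have hne : Real.Gamma (u+v) ≠ 0 := Real.Gamma_ne_zero (fun m => by
    intro hc; nlinarith [Nat.cast_nonneg (α := ℝ) m])
  field_simp
  linarith [h3]

lemma subst_beta (a s : ℝ) :
    (∫ y in Ioi (0:ℝ), y ^ (a - 1) * (y ^ 2 + 4) ^ (-s)) =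
      ∫ x in Ioo (0:ℝ) 1,
        2 ^ (a - 1) * 4 ^ (-s) * (x ^ (s - a / 2 - 1) * (1 - x) ^ (a / 2 - 1)) := by
  set g : ℝ → ℝ := fun x => 2 * Real.sqrt (x⁻¹ - 1) with hg
  set g' : ℝ → ℝ := fun x => -(1 / (x ^ 2 * Real.sqrt (x⁻¹ - 1))) with hg'
  have hq : ∀ x ∈ Ioo (0:ℝ) 1, 0 < x⁻¹ - 1 := by
    intro x hx
    have h1 : x * x⁻¹ = 1 := mul_inv_cancel₀ hx.1.ne'
    have h2 : 0 < x⁻¹ := inv_pos.mpr hx.1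
    nlinarith [hx.1, hx.2]
  have hderiv : ∀ x ∈ Ioo (0:ℝ) 1, HasDerivWithinAt g (g' x) (Ioo (0:ℝ) 1) x := by
    intro x hx
    have hu := hq x hx
    have h1 : HasDerivAt (fun y : ℝ => y⁻¹ - 1) (-(x ^ 2)⁻¹) x :=
      (hasDerivAt_inv hx.1.ne').sub_const 1
    have h2 : HasDerivAt (fun y : ℝ => Real.sqrt (y⁻¹ - 1))
        (1 / (2 * Real.sqrt (x⁻¹ - 1)) * -(x ^ 2)⁻¹) x :=
      (Real.hasDerivAt_sqrt hu.ne').comp x h1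
    have h3 : HasDerivAt g (2 * (1 / (2 * Real.sqrt (x⁻¹ - 1)) * -(x ^ 2)⁻¹)) x :=
      h2.const_mul 2
    have hs0 : Real.sqrt (x⁻¹ - 1) ≠ 0 := by positivity
    have heq : 2 * (1 / (2 * Real.sqrt (x⁻¹ - 1)) * -(x ^ 2)⁻¹) = g' x := by
      simp only [hg']
      field_simp
    rw [heq] at h3
    exact h3.hasDerivWithinAt
  have hinj : InjOn g (Ioo (0:ℝ) 1) := by
    have : StrictAntiOn g (Ioo (0:ℝ) 1) := by
      intro x hx y hy hxy
      have h1 : y⁻¹ - 1 < x⁻¹ - 1 := by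
        have := (inv_lt_inv₀ hy.1 hx.1).mpr hxy
        linarith
      have := Real.sqrt_lt_sqrt (hq y hy).le h1
      simp only [hg]
      linarith
    exact this.injOn
  have himg : g '' Ioo (0:ℝ) 1 = Ioi (0:ℝ) := by
    ext y
    constructor
    · rintro ⟨x, hx, rfl⟩
      have h0 := hq x hx
      have : 0 < Real.sqrt (x⁻¹ - 1) := Real.sqrt_pos.mpr h0
      simp only [hg, mem_Ioi]; linarith
    · intro hy
      have hy' : (0:ℝ) < y := hy
      refine ⟨4 / (y ^ 2 + 4), ⟨by positivity, ?_⟩, ?_⟩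
      · rw [div_lt_one (by positivity)]; nlinarith
      · have h4 : (4 / (y ^ 2 + 4))⁻¹ - 1 = (y / 2) ^ 2 := by
          rw [inv_div]; field_simp; ring
        simp only [hg, h4, Real.sqrt_sq (by positivity : (0:ℝ) ≤ y / 2)]
        ring
  have key := integral_image_eq_integral_abs_deriv_smul measurableSet_Ioo hderiv hinj
      (fun y => y ^ (a - 1) * (y ^ 2 + 4) ^ (-s))
  rw [himg] at key
  rw [key]
  refine setIntegral_congr_fun measurableSet_Ioo fun x hx => ?_
  obtain ⟨hx0, hx1⟩ := hx
  have hu := hq x ⟨hx0, hx1⟩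
  have hsq : 0 < Real.sqrt (x⁻¹ - 1) := Real.sqrt_pos.mpr hu
  have h1x : (0:ℝ) < 1 - x := by linarith
  have habs : |g' x| = 1 / (x ^ 2 * Real.sqrt (x⁻¹ - 1)) := by
    rw [hg', abs_neg, abs_of_pos (by positivity)]
  have e1 : (g x) ^ 2 + 4 = 4 / x := by
    simp only [hg]
    rw [mul_pow, Real.sq_sqrt hu.le]
    field_simp
    ring
  have e2 : (g x) ^ (a - 1) = 2 ^ (a - 1) * (x⁻¹ - 1) ^ ((a - 1) / 2) := by
    simp only [hg]
    rw [Real.mul_rpow (by norm_num) (Real.sqrt_nonneg _), Real.sqrt_eq_rpow,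
      ← Real.rpow_mul hu.le, show (1/2:ℝ) * (a - 1) = (a - 1) / 2 from by ring]
  have e3 : (4 / x) ^ (-s) = 4 ^ (-s) * x ^ s := by
    rw [Real.div_rpow (by norm_num) hx0.le, Real.rpow_neg hx0.le, div_inv_eq_mul]
  have e4 : x⁻¹ - 1 = (1 - x) / x := by field_simp
  have e5 : ∀ c : ℝ, (x⁻¹ - 1) ^ c = (1 - x) ^ c * x ^ (-c) := by
    intro c
    rw [e4, Real.div_rpow h1x.le hx0.le, Real.rpow_neg hx0.le, div_eq_mul_inv]
  have key2 : (x⁻¹ - 1) ^ ((a - 1) / 2) / Real.sqrt (x⁻¹ - 1)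
      = (1 - x) ^ (a / 2 - 1) * x ^ (-(a / 2 - 1)) := by
    rw [Real.sqrt_eq_rpow, ← Real.rpow_sub hu,
      show (a - 1) / 2 - 1 / 2 = a / 2 - 1 from by ring, e5]
  have h2 : (x:ℝ) ^ (2:ℕ) = x ^ (2:ℝ) := by
    rw [← Real.rpow_natCast x 2]; norm_num
  have key3 : x ^ s * x ^ (-(a / 2 - 1)) / x ^ (2:ℕ) = x ^ (s - a / 2 - 1) := by
    rw [h2, ← Real.rpow_add hx0, ← Real.rpow_sub hx0]
    congr 1
    ring
  rw [smul_eq_mul, habs, e1, e2, e3]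
  calc 1 / (x ^ 2 * Real.sqrt (x⁻¹ - 1)) *
        (2 ^ (a - 1) * (x⁻¹ - 1) ^ ((a - 1) / 2) * (4 ^ (-s) * x ^ s))
      = 2 ^ (a - 1) * 4 ^ (-s) *
        (((x⁻¹ - 1) ^ ((a - 1) / 2) / Real.sqrt (x⁻¹ - 1)) * (x ^ s / x ^ 2)) := by
        ring
    _ = 2 ^ (a - 1) * 4 ^ (-s) *
        ((1 - x) ^ (a / 2 - 1) * (x ^ s * x ^ (-(a / 2 - 1)) / x ^ 2)) := by
        rw [key2]; ring
    _ = 2 ^ (a - 1) * 4 ^ (-s) * (x ^ (s - a / 2 - 1) * (1 - x) ^ (a / 2 - 1)) := by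
        rw [key3]; ring

lemma cont_aux (c s : ℝ) : ContinuousOn (fun y : ℝ => y ^ c * (y ^ 2 + 4) ^ (-s)) (Ioi 0) := by
  apply ContinuousOn.mul
  · exact fun x hx => (Real.continuousAt_rpow_const x c (Or.inl (ne_of_gt hx))).continuousWithinAt
  · have : Continuous (fun y : ℝ => (y ^ 2 + 4) ^ (-s)) :=
      ((continuous_pow 2).add continuous_const).rpow_const (fun x => Or.inl (by positivity : x ^ 2 + 4 ≠ 0))
    exact this.continuousOn

lemma integrable_aux {s c : ℝ} (hs : 0 < s) (hc1 : -1 < c) (hc2 : c < 2 * s - 1) :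
    IntegrableOn (fun y : ℝ => y ^ c * (y ^ 2 + 4) ^ (-s)) (Ioi 0) := by
  have hmeas : ∀ t : Set ℝ, MeasurableSet t → t ⊆ Ioi 0 →
      AEStronglyMeasurable (fun y : ℝ => y ^ c * (y ^ 2 + 4) ^ (-s)) (volume.restrict t) :=
    fun t ht hsub => ((cont_aux c s).mono hsub).aestronglyMeasurable ht
  rw [← Ioc_union_Ioi_eq_Ioi (zero_le_one : (0:ℝ) ≤ 1)]
  apply MeasureTheory.IntegrableOn.union
  · -- on Ioc 0 1
    have hint : IntegrableOn (fun y : ℝ => 4 ^ (-s) * y ^ c) (Ioc (0:ℝ) 1) := by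
      exact ((intervalIntegrable_iff_integrableOn_Ioc_of_le zero_le_one).mp
        (intervalIntegral.intervalIntegrable_rpow' hc1)).const_mul _
    refine hint.mono' (hmeas _ measurableSet_Ioc (fun y hy => hy.1)) ?_
    rw [ae_restrict_iff' measurableSet_Ioc]
    refine ae_of_all _ fun y hy => ?_
    have hy0 : 0 < y := hy.1
    rw [Real.norm_eq_abs, abs_mul, abs_of_nonneg (Real.rpow_nonneg hy0.le c),
      abs_of_nonneg (Real.rpow_nonneg (by positivity) (-s))]
    rw [mul_comm (4 ^ (-s) : ℝ)]
    apply mul_le_mul_of_nonneg_left _ (Real.rpow_nonneg hy0.le c)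
    exact Real.rpow_le_rpow_of_nonpos (by norm_num) (by nlinarith) (by linarith)
  · -- on Ioi 1
    have hint : IntegrableOn (fun y : ℝ => y ^ (c - 2 * s)) (Ioi (1:ℝ)) :=
      integrableOn_Ioi_rpow_of_lt (by linarith) one_pos
    refine hint.mono' (hmeas _ measurableSet_Ioi (fun y hy => mem_Ioi.mpr (lt_trans one_pos (mem_Ioi.mp hy)))) ?_
    rw [ae_restrict_iff' measurableSet_Ioi]
    refine ae_of_all _ fun y hy => ?_
    have hy1 : (1:ℝ) < y := hy
    have hy0 : (0:ℝ) < y := lt_trans one_pos hy1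
    rw [Real.norm_eq_abs, abs_mul, abs_of_nonneg (Real.rpow_nonneg hy0.le c),
      abs_of_nonneg (Real.rpow_nonneg (by positivity) (-s))]
    have h1 : ((y:ℝ) ^ 2 + 4) ^ (-s) ≤ (y ^ 2) ^ (-s) :=
      Real.rpow_le_rpow_of_nonpos (by positivity) (by nlinarith) (by linarith)
    have h2 : ((y:ℝ) ^ 2) ^ (-s) = y ^ (-(2*s)) := by
      rw [← Real.rpow_natCast y 2, ← Real.rpow_mul hy0.le]
      norm_num
    calc y ^ c * (y ^ 2 + 4) ^ (-s) ≤ y ^ c * y ^ (-(2*s)) := by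
          rw [← h2]; exact mul_le_mul_of_nonneg_left h1 (Real.rpow_nonneg hy0.le c)
      _ = y ^ (c - 2 * s) := by rw [← Real.rpow_add hy0, show c + -(2*s) = c - 2*s from by ring]

lemma G_formula {s a : ℝ} (hs : 0 < s) (ha : 0 < a) (ha2 : a < 2 * s) :
    (∫ y in Ioi (0:ℝ), y ^ (a - 1) * (y ^ 2 + 4) ^ (-s))
      = 4 ^ (-s) / Real.Gamma s
          * (2 ^ (a - 1) * (Real.Gamma (s - a / 2) * Real.Gamma (a / 2))) := by
  rw [subst_beta]
  simp_rw [mul_assoc]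
  rw [integral_const_mul, integral_const_mul]
  have hb := real_beta (u := s - a / 2) (v := a / 2) (by linarith) (by linarith)
  rw [hb, show s - a / 2 + a / 2 = s from by ring]
  ring

lemma diffat_Gamma {x : ℝ} (hx : 0 < x) : DifferentiableAt ℝ Real.Gamma x :=
  Real.differentiableAt_Gamma fun m => by
    intro h
    have h2 : (0:ℝ) ≤ m := Nat.cast_nonneg m
    rw [h] at hx
    linarith

lemma diffat_logGamma {x : ℝ} (hx : 0 < x) :
    DifferentiableAt ℝ (Real.log ∘ Real.Gamma) x :=
  (diffat_Gamma hx).log (Real.Gamma_pos_of_pos hx).ne'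

lemma deriv_logGamma {x : ℝ} (hx : 0 < x) :
    deriv (Real.log ∘ Real.Gamma) x = digamma x := by
  rw [Function.comp_def, deriv.log (diffat_Gamma hx) (Real.Gamma_pos_of_pos hx).ne', digamma]

lemma digamma_mono {x y : ℝ} (hx : 0 < x) (hxy : x ≤ y) : digamma x ≤ digamma y := by
  rcases eq_or_lt_of_le hxy with rfl | hlt
  · exact le_refl _
  · have hy : 0 < y := lt_trans hx hlt
    have hc := Real.convexOn_log_Gamma
    have h1 := hc.deriv_le_slope (mem_Ioi.mpr hx) (mem_Ioi.mpr hy) hlt (diffat_logGamma hx)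
    have h2 := hc.slope_le_deriv (mem_Ioi.mpr hx) (mem_Ioi.mpr hy) hlt (diffat_logGamma hy)
    rw [deriv_logGamma hx] at h1
    rw [deriv_logGamma hy] at h2
    linarith

lemma digamma_add_one {x : ℝ} (hx : 0 < x) :
    digamma (x + 1) = digamma x + 1 / x := by
  have hder : ∀ {z : ℝ}, 0 < z → DifferentiableAt ℝ (Real.log ∘ Real.Gamma) z :=
    fun hz => diffat_logGamma hz
  have h_rec : ∀ z : ℝ, 0 < z →
      (Real.log ∘ Real.Gamma) (z + 1) = (Real.log ∘ Real.Gamma) z + Real.log z := by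
    intro z hz
    simp only [Function.comp_apply, Real.Gamma_add_one hz.ne',
      Real.log_mul hz.ne' (Real.Gamma_pos_of_pos hz).ne', add_comm]
  have key : deriv (Real.log ∘ Real.Gamma) (x + 1)
      = deriv (Real.log ∘ Real.Gamma) x + 1 / x := by
    rw [← deriv_comp_add_const, one_div, ← deriv_log,
      ← deriv_add (hder hx) (differentiableAt_log hx.ne')]
    apply Filter.EventuallyEq.deriv_eq
    filter_upwards [eventually_gt_nhds hx] using h_rec
  rw [deriv_logGamma (by linarith), deriv_logGamma hx] at key
  exact key

lemma digamma_strict {x y : ℝ} (hx : 0 < x) (hxy : x < y) : digamma x < digamma y := by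
  have hy : 0 < y := lt_trans hx hxy
  have h1 := digamma_mono (by linarith : (0:ℝ) < x + 1) (by linarith : x + 1 ≤ y + 1)
  rw [digamma_add_one hx, digamma_add_one hy] at h1
  have : 1 / y < 1 / x := one_div_lt_one_div_of_lt hx hxy
  linarith

-- `|log y| ≤ (1/δ)(y^δ + y^(-δ))` for `y, δ > 0`
lemma abs_log_le {y δ : ℝ} (hy : 0 < y) (hδ : 0 < δ) :
    |Real.log y| ≤ 1 / δ * (y ^ δ + y ^ (-δ)) := by
  have hp : 0 < y ^ δ := Real.rpow_pos_of_pos hy δ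
  have hn : 0 < y ^ (-δ) := Real.rpow_pos_of_pos hy (-δ)
  rcases le_or_gt 1 y with h1 | h1
  · have hl : 0 ≤ Real.log y := Real.log_nonneg h1
    rw [abs_of_nonneg hl]
    have h2 : δ * Real.log y = Real.log (y ^ δ) := (Real.log_rpow hy δ).symm
    have h3 : Real.log (y ^ δ) ≤ y ^ δ - 1 := Real.log_le_sub_one_of_pos hp
    have h4 : Real.log y ≤ y ^ δ / δ := by
      rw [le_div_iff₀ hδ]; nlinarith
    have h5 : y ^ δ / δ ≤ 1 / δ * (y ^ δ + y ^ (-δ)) := by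
      rw [div_le_iff₀ hδ]; field_simp; nlinarith
    linarith
  · have hl : Real.log y < 0 := Real.log_neg hy h1
    rw [abs_of_neg hl]
    have h2 : (-δ) * Real.log y = Real.log (y ^ (-δ)) := (Real.log_rpow hy (-δ)).symm
    have h3 : Real.log (y ^ (-δ)) ≤ y ^ (-δ) - 1 := Real.log_le_sub_one_of_pos hn
    have h4 : -Real.log y ≤ y ^ (-δ) / δ := by
      rw [le_div_iff₀ hδ]; nlinarith
    have h5 : y ^ (-δ) / δ ≤ 1 / δ * (y ^ δ + y ^ (-δ)) := by
      rw [div_le_iff₀ hδ]; field_simp; nlinarith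
    linarith

-- `y^(a-1) ≤ y^δ + y^(-δ)` for `|a-1| ≤ δ`
lemma rpow_le_sum {y δ a : ℝ} (hy : 0 < y) (ha : |a - 1| ≤ δ) :
    y ^ (a - 1) ≤ y ^ δ + y ^ (-δ) := by
  have hp : 0 < y ^ δ := Real.rpow_pos_of_pos hy δ
  have hn : 0 < y ^ (-δ) := Real.rpow_pos_of_pos hy (-δ)
  rw [abs_le] at ha
  rcases le_or_gt 1 y with h1 | h1
  · have := Real.rpow_le_rpow_of_exponent_le h1 ha.2
    linarith
  · have := Real.rpow_le_rpow_of_exponent_ge hy h1.le ha.1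
    linarith

lemma main_integral {s : ℝ} (hs : 1 / 2 < s) :
    (∫ y in Ioi (0:ℝ), (y ^ 2 + 4) ^ (-s) * Real.log y)
      = 4 ^ (-s) / Real.Gamma s *
          ((Real.log 2 * (Real.Gamma (s - 1 / 2) * Real.sqrt π))
            + ((deriv Real.Gamma (s - 1 / 2) * (-(1 / 2))) * Real.sqrt π
              + Real.Gamma (s - 1 / 2) * (deriv Real.Gamma (1 / 2) * (1 / 2)))) := by
  have hs0 : 0 < s := by linarith
  have hmin : 0 < min 1 (2 * s - 1) := lt_min one_pos (by linarith)
  set δ : ℝ := min 1 (2 * s - 1) / 4 with hδdef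
  have hδ0 : 0 < δ := by rw [hδdef]; linarith
  have hδa : 2 * δ < 1 := by
    have := min_le_left 1 (2 * s - 1); rw [hδdef]; linarith
  have hδb : 2 * δ < 2 * s - 1 := by
    have := min_le_right 1 (2 * s - 1); rw [hδdef]; linarith
  -- the dominated-derivative theorem
  have key := hasDerivAt_integral_of_dominated_loc_of_deriv_le (μ := volume.restrict (Ioi 0))
    (F := fun a y => y ^ (a - 1) * (y ^ 2 + 4) ^ (-s))
    (F' := fun a y => y ^ (a - 1) * Real.log y * (y ^ 2 + 4) ^ (-s))
    (x₀ := 1)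
    (bound := fun y => 1 / δ * ((y ^ δ + y ^ (-δ)) ^ 2 * (y ^ 2 + 4) ^ (-s)))
    (s := ball 1 δ) (ball_mem_nhds 1 hδ0)
    (Filter.Eventually.of_forall fun a =>
      ((cont_aux (a - 1) s).aestronglyMeasurable measurableSet_Ioi))
    (integrable_aux hs0 (by norm_num) (by linarith))
    ?meas' ?bnd ?bint ?dif
  case meas' =>
    have hcont : ContinuousOn (fun y : ℝ => y ^ ((1:ℝ) - 1) * Real.log y * (y ^ 2 + 4) ^ (-s))
        (Ioi 0) := by
      apply ContinuousOn.mul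
      apply ContinuousOn.mul
      · exact fun x hx =>
          (Real.continuousAt_rpow_const x _ (Or.inl (ne_of_gt hx))).continuousWithinAt
      · exact Real.continuousOn_log.mono fun x hx => ne_of_gt hx
      · exact (((continuous_pow 2).add continuous_const).rpow_const
          (fun x => Or.inl (by positivity : x ^ 2 + 4 ≠ 0))).continuousOn
    exact hcont.aestronglyMeasurable measurableSet_Ioi
  case bnd =>
    rw [ae_restrict_iff' measurableSet_Ioi]
    refine ae_of_all _ fun y hy a ha => ?_
    have hy0 : (0:ℝ) < y := hy
    have h4 : (0:ℝ) < (y ^ 2 + 4) ^ (-s) := Real.rpow_pos_of_pos (by positivity) _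
    have ha' : |a - 1| ≤ δ := by
      rw [mem_ball, Real.dist_eq] at ha; exact ha.le
    rw [Real.norm_eq_abs, abs_mul, abs_mul, abs_of_nonneg (Real.rpow_nonneg hy0.le _),
      abs_of_nonneg h4.le]
    have h1 := rpow_le_sum hy0 ha'
    have h2 := abs_log_le hy0 hδ0
    have hpn : 0 < y ^ δ + y ^ (-δ) :=
      add_pos (Real.rpow_pos_of_pos hy0 _) (Real.rpow_pos_of_pos hy0 _)
    calc y ^ (a - 1) * |Real.log y| * (y ^ 2 + 4) ^ (-s)
        ≤ (y ^ δ + y ^ (-δ)) * (1 / δ * (y ^ δ + y ^ (-δ))) * (y ^ 2 + 4) ^ (-s) := by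
          apply mul_le_mul_of_nonneg_right _ h4.le
          apply mul_le_mul h1 h2 (abs_nonneg _) hpn.le
      _ = 1 / δ * ((y ^ δ + y ^ (-δ)) ^ 2 * (y ^ 2 + 4) ^ (-s)) := by ring
  case bint =>
    have hint : Integrable (fun y : ℝ => 2 / δ * (y ^ (2 * δ) * (y ^ 2 + 4) ^ (-s))
        + 2 / δ * (y ^ (-(2 * δ)) * (y ^ 2 + 4) ^ (-s))) (volume.restrict (Ioi 0)) := by
      exact ((integrable_aux hs0 (by linarith) (by linarith)).const_mul _).add
        ((integrable_aux hs0 (by linarith) (by linarith)).const_mul _)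
    apply hint.mono'
    · have hcont : ContinuousOn
          (fun y : ℝ => 1 / δ * ((y ^ δ + y ^ (-δ)) ^ 2 * (y ^ 2 + 4) ^ (-s))) (Ioi 0) := by
        apply ContinuousOn.mul continuousOn_const
        apply ContinuousOn.mul
        · apply ContinuousOn.pow
          apply ContinuousOn.add
          · exact fun x hx =>
              (Real.continuousAt_rpow_const x _ (Or.inl (ne_of_gt hx))).continuousWithinAt
          · exact fun x hx =>
              (Real.continuousAt_rpow_const x _ (Or.inl (ne_of_gt hx))).continuousWithinAt
        · exact (((continuous_pow 2).add continuous_const).rpow_const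
            (fun x => Or.inl (by positivity : x ^ 2 + 4 ≠ 0))).continuousOn
      exact hcont.aestronglyMeasurable measurableSet_Ioi
    · rw [ae_restrict_iff' measurableSet_Ioi]
      refine ae_of_all _ fun y hy => ?_
      have hy0 : (0:ℝ) < y := hy
      have h4 : (0:ℝ) < (y ^ 2 + 4) ^ (-s) := Real.rpow_pos_of_pos (by positivity) _
      have hp : 0 < y ^ δ := Real.rpow_pos_of_pos hy0 δ
      have hn : 0 < y ^ (-δ) := Real.rpow_pos_of_pos hy0 (-δ)
      have e1 : (y ^ δ + y ^ (-δ)) ^ 2 = y ^ (2 * δ) + 2 + y ^ (-(2 * δ)) := by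
        have h1 : y ^ δ * y ^ δ = y ^ (2 * δ) := by
          rw [← Real.rpow_add hy0]; congr 1; ring
        have h2 : y ^ (-δ) * y ^ (-δ) = y ^ (-(2 * δ)) := by
          rw [← Real.rpow_add hy0]; congr 1; ring
        have h3 : y ^ δ * y ^ (-δ) = 1 := by
          rw [← Real.rpow_add hy0]; norm_num
        nlinarith [h1, h2, h3]
      have e2 : (2:ℝ) ≤ y ^ (2 * δ) + y ^ (-(2 * δ)) := by
        have hp2 : 0 < y ^ (2 * δ) := Real.rpow_pos_of_pos hy0 _
        have h3 : y ^ (2 * δ) * y ^ (-(2 * δ)) = 1 := by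
          rw [← Real.rpow_add hy0]; norm_num
        nlinarith [sq_nonneg (y ^ (2 * δ) - 1)]
      rw [Real.norm_eq_abs, abs_of_nonneg (by positivity)]
      rw [e1]
      have hδδ : 0 < 1 / δ := by positivity
      calc 1 / δ * ((y ^ (2 * δ) + 2 + y ^ (-(2 * δ))) * (y ^ 2 + 4) ^ (-s))
          ≤ 1 / δ * ((y ^ (2 * δ) + (y ^ (2 * δ) + y ^ (-(2 * δ))) + y ^ (-(2 * δ)))
              * (y ^ 2 + 4) ^ (-s)) := by
            apply mul_le_mul_of_nonneg_left _ hδδ.le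
            apply mul_le_mul_of_nonneg_right _ h4.le
            linarith
        _ = 2 / δ * (y ^ (2 * δ) * (y ^ 2 + 4) ^ (-s))
              + 2 / δ * (y ^ (-(2 * δ)) * (y ^ 2 + 4) ^ (-s)) := by ring
  case dif =>
    rw [ae_restrict_iff' measurableSet_Ioi]
    refine ae_of_all _ fun y hy a _ => ?_
    have hy0 : (0:ℝ) < y := hy
    have h1 : HasDerivAt (fun b : ℝ => y ^ (b - 1)) (y ^ (a - 1) * Real.log y) a := by
      have h2 := (Real.hasStrictDerivAt_const_rpow hy0 (a - 1)).hasDerivAt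
      exact h2.comp_sub_const a 1
    have := h1.mul_const ((y ^ 2 + 4) ^ (-s))
    exact this
  obtain ⟨-, hderiv⟩ := key
  -- identify with the Gamma-side function near 1
  have hEq : (fun a : ℝ => ∫ y in Ioi (0:ℝ), y ^ (a - 1) * (y ^ 2 + 4) ^ (-s))
      =ᶠ[nhds (1:ℝ)] (fun a : ℝ => 4 ^ (-s) / Real.Gamma s
          * (2 ^ (a - 1) * (Real.Gamma (s - a / 2) * Real.Gamma (a / 2)))) := by
    filter_upwards [Ioo_mem_nhds one_pos (by linarith : (1:ℝ) < 2 * s)] with a ha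
    exact G_formula hs0 ha.1 ha.2
  have hp : (0:ℝ) < s - 1 / 2 := by linarith
  have hd2 : HasDerivAt (fun a : ℝ => 4 ^ (-s) / Real.Gamma s
      * (2 ^ (a - 1) * (Real.Gamma (s - a / 2) * Real.Gamma (a / 2))))
      (4 ^ (-s) / Real.Gamma s *
        ((2 ^ ((1:ℝ) - 1) * Real.log 2) * (Real.Gamma (s - 1 / 2) * Real.Gamma (1 / 2))
          + 2 ^ ((1:ℝ) - 1) * ((deriv Real.Gamma (s - 1 / 2) * (-(1 / 2)))
              * Real.Gamma (1 / 2)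
            + Real.Gamma (s - 1 / 2) * (deriv Real.Gamma (1 / 2) * (1 / 2))))) 1 := by
    apply HasDerivAt.const_mul
    have c1 : HasDerivAt (fun a : ℝ => (2:ℝ) ^ (a - 1)) (2 ^ ((1:ℝ) - 1) * Real.log 2) 1 := by
      have h2 := (Real.hasStrictDerivAt_const_rpow (by norm_num : (0:ℝ) < 2)
        ((1:ℝ) - 1)).hasDerivAt
      exact h2.comp_sub_const 1 1
    have c2 : HasDerivAt (fun a : ℝ => Real.Gamma (s - a / 2))
        (deriv Real.Gamma (s - 1 / 2) * (-(1 / 2))) 1 := by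
      have h3 : HasDerivAt (fun a : ℝ => s - a / 2) (-(1 / 2)) 1 := by
        simpa using ((hasDerivAt_id (1:ℝ)).div_const 2).const_sub s
      have := HasDerivAt.comp (x := (1:ℝ)) (hh := h3)
        (hh₂ := (diffat_Gamma hp).hasDerivAt)
      exact this
    have c3 : HasDerivAt (fun a : ℝ => Real.Gamma (a / 2))
        (deriv Real.Gamma (1 / 2) * (1 / 2)) 1 := by
      have h3 : HasDerivAt (fun a : ℝ => a / 2) (1 / 2) 1 := by
        simpa using (hasDerivAt_id (1:ℝ)).div_const 2
      have := HasDerivAt.comp (x := (1:ℝ)) (hh := h3)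
        (hh₂ := (diffat_Gamma (by norm_num : (0:ℝ) < 1 / 2)).hasDerivAt)
      exact this
    have := c1.mul (c2.mul c3)
    simp only [Pi.mul_def] at this
    convert this using 1 <;> ring
  have hderiv2 := hd2.congr_of_eventuallyEq hEq
  have huniq := hderiv.unique hderiv2
  -- finish
  have hLHS : (∫ y in Ioi (0:ℝ), (y ^ 2 + 4) ^ (-s) * Real.log y)
      = ∫ y in Ioi (0:ℝ), y ^ ((1:ℝ) - 1) * Real.log y * (y ^ 2 + 4) ^ (-s) := by
    refine setIntegral_congr_fun measurableSet_Ioi fun y hy => ?_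
    rw [show (1:ℝ) - 1 = 0 from by norm_num, Real.rpow_zero]
    ring
  rw [hLHS, huniq, show (1:ℝ) - 1 = 0 from by norm_num, Real.rpow_zero,
    Real.Gamma_one_half_eq]
  ring

/-- `I(ν) = (1/4)(ψ(1) - ψ((2-ν)/2))`, and hence `I(ν) < 0` iff `ν < 0`. -/
theorem I_formula_and_sign (ν : ℝ) (hν : ν < 2) :
    I ν = 1 / 4 * (digamma 1 - digamma ((2 - ν) / 2)) ∧ (I ν < 0 ↔ ν < 0) := by
  have hs : (1:ℝ) / 2 < (3 - ν) / 2 := by linarith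
  have hmain := main_integral hs
  rw [show (3 - ν) / 2 - 1 / 2 = (2 - ν) / 2 from by ring] at hmain
  have hp0 : (0:ℝ) < (2 - ν) / 2 := by linarith
  have hΓp : 0 < Real.Gamma ((2 - ν) / 2) := Real.Gamma_pos_of_pos hp0
  have hΓs : 0 < Real.Gamma ((3 - ν) / 2) := Real.Gamma_pos_of_pos (by linarith)
  have hπ : 0 < Real.sqrt π := Real.sqrt_pos.mpr Real.pi_pos
  have hA : (0:ℝ) < 2 ^ (2 - ν) := Real.rpow_pos_of_pos two_pos _
  have h42 : (4:ℝ) = (2:ℝ) ^ (2:ℝ) := by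
    have h := Real.rpow_natCast (2:ℝ) 2
    norm_num at h
    linarith
  have h4 : (4:ℝ) ^ (-((3 - ν) / 2)) = 1 / (2 * 2 ^ (2 - ν)) := by
    have e1 : (2:ℝ) ^ (2 - ν) * (4:ℝ) ^ (-((3 - ν) / 2)) = 1 / 2 := by
      rw [h42, ← Real.rpow_mul (by norm_num : (0:ℝ) ≤ 2),
        ← Real.rpow_add (by norm_num : (0:ℝ) < 2),
        show 2 - ν + 2 * -((3 - ν) / 2) = -1 from by ring,
        Real.rpow_neg_one]
      norm_num
    field_simp at e1 ⊢
    linarith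
  have hIeq : I ν = 2 ^ (2 - ν) / Real.sqrt π
      * (Real.Gamma ((3 - ν) / 2) / Real.Gamma (1 - ν / 2))
      * ∫ y in Ioi (0:ℝ), (y ^ 2 + 4) ^ (-((3 - ν) / 2)) * Real.log y := by
    rw [I]
    simp_rw [mul_assoc]
    rw [integral_const_mul, integral_const_mul]
  have hd1 : digamma 1 = -Real.eulerMascheroniConstant := by
    rw [digamma, Real.hasDerivAt_Gamma_one.deriv, Real.Gamma_one, div_one]
  have hdh : deriv Real.Gamma (1 / 2)
      = -Real.sqrt π * (Real.eulerMascheroniConstant + 2 * Real.log 2) :=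
    Real.hasDerivAt_Gamma_one_half.deriv
  have hform : I ν = 1 / 4 * (digamma 1 - digamma ((2 - ν) / 2)) := by
    rw [hIeq, hmain, hd1, digamma, h4, hdh,
      show 1 - ν / 2 = (2 - ν) / 2 from by ring]
    field_simp
    ring
  refine ⟨hform, ?_⟩
  rw [hform]
  constructor
  · intro h
    by_contra hc
    push_neg at hc
    have hple : (2 - ν) / 2 ≤ 1 := by linarith
    have := digamma_mono hp0 hple
    linarith
  · intro h
    have := digamma_strict one_pos (by linarith : (1:ℝ) < (2 - ν) / 2)
    linarith
end
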